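/- Infeasibility bound for linearized ASGARD on equality-constrained problems: under the same assumptions and algorithm as in the equality-constrained setting (h = ι_{{c}} and (x*, y*) a saddle point of the Lagrangian), for every k ≥ 0: ‖M x̄^{k+1} − c‖_{S⁻¹} ≤ (β_0/(k+1)) [ ‖y* − ẏ‖_S + ( ‖y* − ẏ‖²_S + (B_1/β_0) ‖x̃⁰ − x*‖² )^{1/2} ]. -/

import Mathlib

open scoped Classical
open scoped RealInnerProductSpace

set_option maxHeartbeats 2000000 in
private lemma stmt17_line_hasDerivAt {H : Type*} [NormedAddCommGroup H]
    [InnerProductSpace ℝ H] [CompleteSpace H]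
    (f : H → ℝ) {f' : H → H} (hf : ∀ x, HasGradientAt f (f' x) x)
    (x d : H) (t : ℝ) :
    HasDerivAt (fun s : ℝ => f (x + s • d)) ⟪f' (x + t • d), d⟫ t := by
  have hline : HasDerivAt (fun s : ℝ => x + s • d) d t := by
    simpa using ((hasDerivAt_id t).smul_const d).const_add x
  have h := (hf (x + t • d)).hasFDerivAt.comp_hasDerivAt t hline
  exact h

set_option maxHeartbeats 2000000 in
private lemma stmt17_descent {H : Type*} [NormedAddCommGroup H]
    [InnerProductSpace ℝ H] [CompleteSpace H]
    (f : H → ℝ) {f' : H → H} {L : ℝ} (hL : 0 ≤ L)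
    (hf : ∀ x, HasGradientAt f (f' x) x)
    (hlip : ∀ x y : H, ‖f' x - f' y‖ ≤ L * ‖x - y‖) (x d : H) :
    f (x + d) ≤ f x + ⟪f' x, d⟫ + L / 2 * ‖d‖ ^ 2 := by
  set φ : ℝ → ℝ := fun t => f (x + t • d) - t * ⟪f' x, d⟫ - L * ‖d‖ ^ 2 / 2 * t ^ 2 with hφ
  have hd : ∀ t : ℝ, HasDerivAt φ (⟪f' (x + t • d), d⟫ - ⟪f' x, d⟫ - L * ‖d‖ ^ 2 * t) t := by
    intro t
    have h1 := stmt17_line_hasDerivAt f hf x d t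
    have h2 : HasDerivAt (fun s : ℝ => s * ⟪f' x, d⟫) ⟪f' x, d⟫ t := by
      simpa using (hasDerivAt_id t).mul_const ⟪f' x, d⟫
    have h3 : HasDerivAt (fun s : ℝ => L * ‖d‖ ^ 2 / 2 * s ^ 2) (L * ‖d‖ ^ 2 * t) t := by
      have := (hasDerivAt_pow 2 t).const_mul (L * ‖d‖ ^ 2 / 2)
      exact this.congr_deriv (by simp only [Nat.cast_ofNat, Nat.add_one_sub_one, pow_one]; ring)
    exact (h1.sub h2).sub h3
  have hanti : AntitoneOn φ (Set.Icc (0:ℝ) 1) := by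
    apply antitoneOn_of_hasDerivWithinAt_nonpos (convex_Icc 0 1)
      (fun t _ => (hd t).continuousAt.continuousWithinAt)
      (fun t ht => ((hd t).hasDerivWithinAt))
    intro t ht
    rw [interior_Icc] at ht
    have h1 : ⟪f' (x + t • d) - f' x, d⟫ ≤ ‖f' (x + t • d) - f' x‖ * ‖d‖ :=
      real_inner_le_norm _ _
    have h2 : ‖f' (x + t • d) - f' x‖ ≤ L * ‖t • d‖ := by
      have := hlip (x + t • d) x
      simpa using this
    have h3 : ‖t • d‖ = t * ‖d‖ := by
      rw [norm_smul, Real.norm_eq_abs, abs_of_pos ht.1]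
    have h4 : ⟪f' (x + t • d) - f' x, d⟫ = ⟪f' (x + t • d), d⟫ - ⟪f' x, d⟫ :=
      inner_sub_left _ _ _
    rw [h3] at h2
    have h5 := mul_le_mul_of_nonneg_right h2 (norm_nonneg d)
    have h6 : L * (t * ‖d‖) * ‖d‖ = L * ‖d‖ ^ 2 * t := by ring
    linarith
  have h01 := hanti (Set.left_mem_Icc.2 zero_le_one) (Set.right_mem_Icc.2 zero_le_one)
    zero_le_one
  have e0 : φ 0 = f x := by simp [hφ]
  have e1 : φ 1 = f (x + d) - ⟪f' x, d⟫ - L * ‖d‖ ^ 2 / 2 := by simp [hφ]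
  rw [e0, e1] at h01
  linarith

set_option maxHeartbeats 2000000 in
private lemma stmt17_convex_grad {H : Type*} [NormedAddCommGroup H]
    [InnerProductSpace ℝ H] [CompleteSpace H]
    (f : H → ℝ) {f' : H → H} (hcvx : ConvexOn ℝ Set.univ f)
    (hf : ∀ x, HasGradientAt f (f' x) x) (x y : H) :
    f x + ⟪f' x, y - x⟫ ≤ f y := by
  have hd : HasDerivAt (fun s : ℝ => f (x + s • (y - x))) ⟪f' x, y - x⟫ 0 := by
    have := stmt17_line_hasDerivAt f hf x (y - x) 0
    simpa using this
  have hslope := hasDerivAt_iff_tendsto_slope_zero.mp hd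
  have hmono : Filter.Tendsto (fun t : ℝ => t⁻¹ • (f (x + (0 + t) • (y - x)) -
      f (x + (0:ℝ) • (y - x)))) (nhdsWithin 0 (Set.Ioi 0)) (nhds ⟪f' x, y - x⟫) :=
    hslope.mono_left (nhdsWithin_mono 0 (fun t ht => ne_of_gt ht))
  have hle : ⟪f' x, y - x⟫ ≤ f y - f x := by
    refine le_of_tendsto hmono ?_
    filter_upwards [Ioc_mem_nhdsGT_of_mem (Set.left_mem_Ico.2 zero_lt_one)] with t ht
    have hcomb : f (x + t • (y - x)) ≤ (1 - t) * f x + t * f y := by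
      have h := hcvx.2 (Set.mem_univ x) (Set.mem_univ y) (by linarith [ht.2] : (0:ℝ) ≤ 1 - t)
        (le_of_lt ht.1) (by ring)
      have he : (1 - t) • x + t • y = x + t • (y - x) := by module
      rw [he] at h
      simpa using h
    have ht0 : (0:ℝ) < t := ht.1
    rw [zero_add, zero_smul, add_zero, smul_eq_mul]
    rw [inv_mul_le_iff₀ ht0]
    nlinarith
  linarith

set_option maxHeartbeats 2000000 in
private lemma stmt17_prox {H : Type*} [NormedAddCommGroup H]
    [InnerProductSpace ℝ H] {domg : Set H} {g : H → ℝ}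
    (hdomg_cvx : Convex ℝ domg) (hg_cvx : ConvexOn ℝ domg g)
    {κ : ℝ} (hκ : 0 < κ) {p u : H} (hp : p ∈ domg)
    (hmin : ∀ z ∈ domg, g p + κ / 2 * ‖p - u‖ ^ 2 ≤ g z + κ / 2 * ‖z - u‖ ^ 2) :
    ∀ z ∈ domg, g p + κ / 2 * ‖p - u‖ ^ 2 + κ / 2 * ‖z - p‖ ^ 2 ≤
      g z + κ / 2 * ‖z - u‖ ^ 2 := by
  have hVI : ∀ z ∈ domg, g p - g z - κ * ⟪p - u, z - p⟫ ≤ 0 := by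
    intro z hz
    have key : ∀ t : ℝ, t ∈ Set.Ioc (0:ℝ) 1 →
        g p - g z - κ * ⟪p - u, z - p⟫ ≤ t * (κ / 2 * ‖z - p‖ ^ 2) := by
      intro t ht
      have hzt : p + t • (z - p) ∈ domg := by
        have h := hdomg_cvx hp hz (by linarith [ht.2] : (0:ℝ) ≤ 1 - t) (le_of_lt ht.1)
          (by ring)
        have he : (1 - t) • p + t • z = p + t • (z - p) := by module
        rwa [he] at h
      have h1 := hmin _ hzt
      have h2 : g (p + t • (z - p)) ≤ (1 - t) * g p + t * g z := by
        have h := hg_cvx.2 hp hz (by linarith [ht.2] : (0:ℝ) ≤ 1 - t) (le_of_lt ht.1)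
          (by ring)
        have he : (1 - t) • p + t • z = p + t • (z - p) := by module
        rw [he] at h
        simpa using h
      have h3 : ‖p + t • (z - p) - u‖ ^ 2 =
          ‖p - u‖ ^ 2 + 2 * (t * ⟪p - u, z - p⟫) + t ^ 2 * ‖z - p‖ ^ 2 := by
        have he : p + t • (z - p) - u = (p - u) + t • (z - p) := by abel
        rw [he, norm_add_sq_real, real_inner_smul_right]
        have hn : ‖t • (z - p)‖ ^ 2 = t ^ 2 * ‖z - p‖ ^ 2 := by
          rw [norm_smul, mul_pow, Real.norm_eq_abs, sq_abs]
        rw [hn]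
      rw [h3] at h1
      have ht0 : (0:ℝ) < t := ht.1
      have hmain : t * (g p - g z - κ * ⟪p - u, z - p⟫) ≤
          t * (t * (κ / 2 * ‖z - p‖ ^ 2)) := by nlinarith [h1, h2]
      have := (mul_le_mul_iff_right₀ ht0).mp hmain
      have htle : t * (κ / 2 * ‖z - p‖ ^ 2) ≤ 1 * (κ / 2 * ‖z - p‖ ^ 2) := by
        apply mul_le_mul_of_nonneg_right ht.2
        positivity
      linarith
    by_contra hcon
    push_neg at hcon
    set ε := g p - g z - κ * ⟪p - u, z - p⟫ with hε
    set C := κ / 2 * ‖z - p‖ ^ 2 with hC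
    have hC0 : 0 ≤ C := by positivity
    have ht1 : min 1 (ε / (2 * (C + 1))) ∈ Set.Ioc (0:ℝ) 1 := by
      constructor
      · apply lt_min one_pos
        positivity
      · exact min_le_left _ _
    have hk := key _ ht1
    have hmin2 : min 1 (ε / (2 * (C + 1))) ≤ ε / (2 * (C + 1)) := min_le_right _ _
    have hmul : min 1 (ε / (2 * (C + 1))) * C ≤ ε / (2 * (C + 1)) * C :=
      mul_le_mul_of_nonneg_right hmin2 hC0
    have hfrac : ε / (2 * (C + 1)) * C < ε := by
      rw [div_mul_eq_mul_div, div_lt_iff₀ (by positivity)]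
      nlinarith
    linarith
  intro z hz
  have hVIz := hVI z hz
  have h4 : κ / 2 * ‖z - u‖ ^ 2 =
      κ / 2 * ‖z - p‖ ^ 2 + κ * ⟪z - p, p - u⟫ + κ / 2 * ‖p - u‖ ^ 2 := by
    have he : z - u = (z - p) + (p - u) := by abel
    rw [he, norm_add_sq_real]
    ring
  have h5 : ⟪z - p, p - u⟫ = ⟪p - u, z - p⟫ := real_inner_comm _ _
  have h6 : κ * ⟪z - p, p - u⟫ = κ * ⟪p - u, z - p⟫ := by rw [h5]
  linarith

set_option maxHeartbeats 2000000 in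
private lemma stmt17_periter {H G : Type*} [NormedAddCommGroup H] [InnerProductSpace ℝ H] [CompleteSpace H]
    [NormedAddCommGroup G] [InnerProductSpace ℝ G] [CompleteSpace G]
    (M : H →L[ℝ] G) (c : G)
    (f : H → ℝ) (f' : H → H) (Lf : ℝ) (hLf : 0 ≤ Lf)
    (hf_cvx : ConvexOn ℝ Set.univ f)
    (hf_grad : ∀ x, HasGradientAt f (f' x) x)
    (hf_lip : ∀ x y : H, ‖f' x - f' y‖ ≤ Lf * ‖x - y‖)
    (domg : Set H) (g : H → ℝ) (hdomg_cvx : Convex ℝ domg) (hg_cvx : ConvexOn ℝ domg g)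
    (Sinv : G →L[ℝ] G)
    (hbsymm : ∀ u w : G, ⟪u, Sinv w⟫ = ⟪w, Sinv u⟫)
    (hqnn : ∀ u : G, 0 ≤ ⟪u, Sinv u⟫)
    (nM : ℝ) (hqM : ∀ x : H, ⟪M x, Sinv (M x)⟫ ≤ nM ^ 2 * ‖x‖ ^ 2)
    (ydot : G) (xopt : H) (hxopt_mem : xopt ∈ domg) (hfeas : M xopt = c)
    (τ β β' B : ℝ) (hτ0 : 0 < τ) (hτ1 : τ ≤ 1) (hβ'pos : 0 < β') (hββ' : β = (1 + τ) * β')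
    (hB : B = Lf + nM ^ 2 / β') (hBpos : 0 < B)
    (xb0 xt0 xt1 xhat : H) (hxhat : xhat = (1 - τ) • xb0 + τ • xt0)
    (v : H) (hv : v = (ContinuousLinearMap.adjoint M) (ydot + β'⁻¹ • Sinv (M xhat - c)))
    (hxt1mem : xt1 ∈ domg)
    (hmin : ∀ z ∈ domg, g xt1 + τ * B / 2 * ‖xt1 - xt0 + (τ * B)⁻¹ • (f' xhat + v)‖ ^ 2 ≤
        g z + τ * B / 2 * ‖z - xt0 + (τ * B)⁻¹ • (f' xhat + v)‖ ^ 2)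
    (hcase : xb0 ∈ domg ∨ τ = 1)
    (xb1 : H) (hxb1 : xb1 = (1 - τ) • xb0 + τ • xt1) :
    f xb1 + g xb1 + (⟪M xb1 - c, ydot⟫ + 1 / (2 * β') * ⟪M xb1 - c, Sinv (M xb1 - c)⟫) ≤
      (1 - τ) * (f xb0 + g xb0 + (⟪M xb0 - c, ydot⟫ + 1 / (2 * β) * ⟪M xb0 - c, Sinv (M xb0 - c)⟫))
      + τ * (f xopt + g xopt)
      + τ ^ 2 * B / 2 * (‖xt0 - xopt‖ ^ 2 - ‖xt1 - xopt‖ ^ 2) := by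
  have hκpos : 0 < τ * B := mul_pos hτ0 hBpos
  have hκne : τ * B ≠ 0 := ne_of_gt hκpos
  -- Step S1 : descent lemma
  have hstep : xb1 = xhat + τ • (xt1 - xt0) := by rw [hxb1, hxhat]; module
  have S1 : f xb1 ≤ f xhat + τ * ⟪f' xhat, xt1 - xt0⟫ + Lf / 2 * (τ ^ 2 * ‖xt1 - xt0‖ ^ 2) := by
    have h := stmt17_descent f hLf hf_grad hf_lip xhat (τ • (xt1 - xt0))
    rw [← hstep] at h
    rw [real_inner_smul_right] at h
    have hn : ‖τ • (xt1 - xt0)‖ ^ 2 = τ ^ 2 * ‖xt1 - xt0‖ ^ 2 := by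
      rw [norm_smul, mul_pow, Real.norm_eq_abs, sq_abs]
    rw [hn] at h
    linarith
  -- Step S2 : convexity of f
  have S2a := stmt17_convex_grad f hf_cvx hf_grad xhat xb0
  have S2b := stmt17_convex_grad f hf_cvx hf_grad xhat xopt
  have S2a' : (1 - τ) * (f xhat + ⟪f' xhat, xb0 - xhat⟫) ≤ (1 - τ) * f xb0 :=
    mul_le_mul_of_nonneg_left S2a (by linarith)
  have S2b' : τ * (f xhat + ⟪f' xhat, xopt - xhat⟫) ≤ τ * f xopt :=
    mul_le_mul_of_nonneg_left S2b (le_of_lt hτ0)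
  -- Step S3 : prox inequality
  have hminu : ∀ z ∈ domg, g xt1 + (τ * B) / 2 * ‖xt1 - (xt0 - (τ * B)⁻¹ • (f' xhat + v))‖ ^ 2 ≤
      g z + (τ * B) / 2 * ‖z - (xt0 - (τ * B)⁻¹ • (f' xhat + v))‖ ^ 2 := by
    intro z hz
    have h := hmin z hz
    have e1 : xt1 - (xt0 - (τ * B)⁻¹ • (f' xhat + v)) = xt1 - xt0 + (τ * B)⁻¹ • (f' xhat + v) := by
      abel
    have e2 : z - (xt0 - (τ * B)⁻¹ • (f' xhat + v)) = z - xt0 + (τ * B)⁻¹ • (f' xhat + v) := by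
      abel
    rw [e1, e2]
    exact h
  have hstrong := stmt17_prox hdomg_cvx hg_cvx hκpos hxt1mem hminu xopt hxopt_mem
  -- expand the prox inequality
  have hexp : ∀ z : H, (τ * B) / 2 * ‖z - (xt0 - (τ * B)⁻¹ • (f' xhat + v))‖ ^ 2 =
      (τ * B) / 2 * ‖z - xt0‖ ^ 2 + ⟪f' xhat + v, z - xt0⟫
      + (τ * B)⁻¹ / 2 * ‖f' xhat + v‖ ^ 2 := by
    intro z
    have e : z - (xt0 - (τ * B)⁻¹ • (f' xhat + v)) = (z - xt0) + (τ * B)⁻¹ • (f' xhat + v) := by abel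
    rw [e, norm_add_sq_real, real_inner_smul_right]
    have hn : ‖(τ * B)⁻¹ • (f' xhat + v)‖ ^ 2 = ((τ * B)⁻¹) ^ 2 * ‖f' xhat + v‖ ^ 2 := by
      rw [norm_smul, mul_pow, Real.norm_eq_abs, sq_abs]
    rw [hn, real_inner_comm]
    field_simp
  have A : g xt1 + ⟪f' xhat + v, xt1 - xt0⟫ + (τ * B) / 2 * ‖xt1 - xt0‖ ^ 2
      + (τ * B) / 2 * ‖xopt - xt1‖ ^ 2 ≤
      g xopt + ⟪f' xhat + v, xopt - xt0⟫ + (τ * B) / 2 * ‖xopt - xt0‖ ^ 2 := by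
    have h1 := hexp xt1
    have h2 := hexp xopt
    linarith [hstrong]
  have A' := mul_le_mul_of_nonneg_left A (le_of_lt hτ0)
  -- Step S4 : convexity of g
  have S4 : g xb1 ≤ (1 - τ) * g xb0 + τ * g xt1 := by
    rcases hcase with hmem | hone
    · have h := hg_cvx.2 hmem hxt1mem (by linarith : (0:ℝ) ≤ 1 - τ) (le_of_lt hτ0) (by ring)
      rw [← hxb1] at h
      simpa using h
    · rw [hone] at hxb1
      simp at hxb1
      rw [hxb1, hone]
      simp
  -- Step S5 : the smoothed-penalty inequality
  have hu4 : M xb1 - c = (1 - τ) • (M xb0 - c) + τ • (M xt1 - c) := by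
    rw [hxb1]
    simp only [map_add, ContinuousLinearMap.map_smul]
    module
  have huh : M xhat - c = (1 - τ) • (M xb0 - c) + τ • (M xt0 - c) := by
    rw [hxhat]
    simp only [map_add, ContinuousLinearMap.map_smul]
    module
  have hw : M xt1 - M xt0 = (M xt1 - c) - (M xt0 - c) := by abel
  have S5 : ⟪M xb1 - c, ydot⟫ + 1 / (2 * β') * ⟪M xb1 - c, Sinv (M xb1 - c)⟫ ≤
      (1 - τ) * (⟪M xb0 - c, ydot⟫ + 1 / (2 * β) * ⟪M xb0 - c, Sinv (M xb0 - c)⟫)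
      + τ * ⟪M xt1 - c, ydot + β'⁻¹ • Sinv (M xhat - c)⟫
      + τ ^ 2 / (2 * β') * ⟪M xt1 - M xt0, Sinv (M xt1 - M xt0)⟫ := by
    have hQ1 := hqnn ((M xb0 - c) - (1 + τ) • (M xhat - c))
    have hQ2 := hqnn (M xhat - c)
    have key : ((1 - τ) * (⟪M xb0 - c, ydot⟫ + 1 / (2 * β) * ⟪M xb0 - c, Sinv (M xb0 - c)⟫)
        + τ * ⟪M xt1 - c, ydot + β'⁻¹ • Sinv (M xhat - c)⟫
        + τ ^ 2 / (2 * β') * ⟪M xt1 - M xt0, Sinv (M xt1 - M xt0)⟫)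
        - (⟪M xb1 - c, ydot⟫ + 1 / (2 * β') * ⟪M xb1 - c, Sinv (M xb1 - c)⟫)
        = (1 - τ) / (2 * β) * ⟪(M xb0 - c) - (1 + τ) • (M xhat - c),
            Sinv ((M xb0 - c) - (1 + τ) • (M xhat - c))⟫
          + τ ^ 2 / (2 * β') * ⟪M xhat - c, Sinv (M xhat - c)⟫ := by
      rw [hu4, huh, hw, hββ']
      generalize M xb0 - c = a
      generalize M xt0 - c = b1
      generalize M xt1 - c = b2
      simp only [map_add, map_sub, ContinuousLinearMap.map_smul, inner_add_left,
        inner_add_right, inner_sub_left, inner_sub_right, real_inner_smul_left,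
        real_inner_smul_right, smul_sub, smul_add, smul_smul]
      simp only [hbsymm b1 a, hbsymm b2 a, hbsymm b2 b1]
      have h1τ : (1:ℝ) + τ ≠ 0 := by linarith
      have hβ'ne : β' ≠ 0 := ne_of_gt hβ'pos
      field_simp
      ring
    have hc1 : 0 ≤ (1 - τ) / (2 * β) *
        ⟪(M xb0 - c) - (1 + τ) • (M xhat - c), Sinv ((M xb0 - c) - (1 + τ) • (M xhat - c))⟫ := by
      apply mul_nonneg _ hQ1
      apply div_nonneg (by linarith)
      rw [hββ']
      positivity
    have hc2 : 0 ≤ τ ^ 2 / (2 * β') * ⟪M xhat - c, Sinv (M xhat - c)⟫ := by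
      apply mul_nonneg _ hQ2
      positivity
    linarith
  -- linear-term bookkeeping
  have E0 : τ * ⟪f' xhat + v, xt1 - xt0⟫ = τ * ⟪f' xhat, xt1 - xt0⟫ + τ * ⟪v, xt1 - xt0⟫ := by
    rw [inner_add_left]; ring
  have E0b : τ * ⟪f' xhat + v, xopt - xt0⟫ = τ * ⟪f' xhat, xopt - xt0⟫ + τ * ⟪v, xopt - xt0⟫ := by
    rw [inner_add_left]; ring
  have hvinner : ∀ z : H, ⟪v, z⟫ = ⟪ydot + β'⁻¹ • Sinv (M xhat - c), M z⟫ := by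
    intro z
    rw [hv, ContinuousLinearMap.adjoint_inner_left]
  have E1 : τ * ⟪v, xt1 - xt0⟫ = τ * ⟪M xt1 - c, ydot + β'⁻¹ • Sinv (M xhat - c)⟫
      - τ * ⟪M xt0 - c, ydot + β'⁻¹ • Sinv (M xhat - c)⟫ := by
    have hMd : M (xt1 - xt0) = M xt1 - M xt0 := map_sub M _ _
    have c1 : ⟪ydot + β'⁻¹ • Sinv (M xhat - c), M xt1⟫
        = ⟪M xt1, ydot + β'⁻¹ • Sinv (M xhat - c)⟫ := real_inner_comm _ _
    have c2 : ⟪ydot + β'⁻¹ • Sinv (M xhat - c), M xt0⟫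
        = ⟪M xt0, ydot + β'⁻¹ • Sinv (M xhat - c)⟫ := real_inner_comm _ _
    rw [hvinner, hMd, inner_sub_right, c1, c2, inner_sub_left, inner_sub_left]
    ring
  have E2 : τ * ⟪v, xopt - xt0⟫ = - (τ * ⟪M xt0 - c, ydot + β'⁻¹ • Sinv (M xhat - c)⟫) := by
    have hMd : M (xopt - xt0) = M xopt - M xt0 := map_sub M _ _
    have c1 : ⟪ydot + β'⁻¹ • Sinv (M xhat - c), c⟫
        = ⟪c, ydot + β'⁻¹ • Sinv (M xhat - c)⟫ := real_inner_comm _ _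
    have c2 : ⟪ydot + β'⁻¹ • Sinv (M xhat - c), M xt0⟫
        = ⟪M xt0, ydot + β'⁻¹ • Sinv (M xhat - c)⟫ := real_inner_comm _ _
    rw [hvinner, hMd, inner_sub_right, hfeas, c1, c2]
    have : ⟪M xt0 - c, ydot + β'⁻¹ • Sinv (M xhat - c)⟫
        = ⟪M xt0, ydot + β'⁻¹ • Sinv (M xhat - c)⟫ - ⟪c, ydot + β'⁻¹ • Sinv (M xhat - c)⟫ :=
      inner_sub_left _ _ _
    rw [this]
    ring
  have E3 : τ * ⟪f' xhat, xopt - xt0⟫ = (1 - τ) * ⟪f' xhat, xb0 - xhat⟫ + τ * ⟪f' xhat, xopt - xhat⟫ := by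
    have hvec : τ • (xopt - xt0) = (1 - τ) • (xb0 - xhat) + τ • (xopt - xhat) := by
      rw [hxhat]; module
    have := congrArg (fun w => ⟪f' xhat, w⟫) hvec
    simpa only [inner_add_right, real_inner_smul_right] using this
  -- quadratic-term bookkeeping
  have E5 : τ ^ 2 / (2 * β') * ⟪M xt1 - M xt0, Sinv (M xt1 - M xt0)⟫ ≤
      τ ^ 2 / (2 * β') * (nM ^ 2 * ‖xt1 - xt0‖ ^ 2) := by
    apply mul_le_mul_of_nonneg_left _ (by positivity)
    have := hqM (xt1 - xt0)
    rwa [map_sub] at this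
  have E6 : Lf / 2 * (τ ^ 2 * ‖xt1 - xt0‖ ^ 2) + τ ^ 2 / (2 * β') * (nM ^ 2 * ‖xt1 - xt0‖ ^ 2)
      = τ * (τ * B / 2 * ‖xt1 - xt0‖ ^ 2) := by
    rw [hB]
    field_simp
  have E7 : τ * (τ * B / 2 * ‖xopt - xt0‖ ^ 2) = τ ^ 2 * B / 2 * ‖xt0 - xopt‖ ^ 2 := by
    rw [norm_sub_rev xopt xt0]; ring
  have E7b : τ * (τ * B / 2 * ‖xopt - xt1‖ ^ 2) = τ ^ 2 * B / 2 * ‖xt1 - xopt‖ ^ 2 := by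
    rw [norm_sub_rev xopt xt1]; ring
  linarith [S1, S2a', S2b', A', S4, S5, E0, E0b, E1, E2, E3, E5, E6, E7, E7b]

set_option maxHeartbeats 4000000 in
/-- infeasibility bound for linearized ASGARD on the
equality-constrained problem (`h = ι_{{c}}`): for every `k`,
`‖Mx̄^{k+1} − c‖_{S⁻¹} ≤ (β_0/(k+1)) [ ‖y* − ẏ‖_S
+ (‖y* − ẏ‖²_S + (B_1/β_0)‖x̃⁰ − x*‖²)^{1/2} ]`. -/
theorem stmt17
    {H G : Type*} [NormedAddCommGroup H] [InnerProductSpace ℝ H] [CompleteSpace H]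
    [NormedAddCommGroup G] [InnerProductSpace ℝ G] [CompleteSpace G]
    (M : H →L[ℝ] G) (c : G)
    -- the smooth term f, with gradient f' which is Lf-Lipschitz
    (f : H → ℝ) (f' : H → H) (Lf : ℝ) (hLf : 0 ≤ Lf)
    (hf_cvx : ConvexOn ℝ Set.univ f)
    (hf_grad : ∀ x, HasGradientAt f (f' x) x)
    (hf_lip : ∀ x y : H, ‖f' x - f' y‖ ≤ Lf * ‖x - y‖)
    -- the proper lsc convex function g, represented by its domain and real values on it
    (domg : Set H) (g : H → ℝ)
    (hdomg_ne : domg.Nonempty) (hdomg_cvx : Convex ℝ domg)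
    (hg_cvx : ConvexOn ℝ domg g)
    (hg_lsc : LowerSemicontinuous fun x => if x ∈ domg then ((g x : EReal)) else (⊤ : EReal))
    (gE : H → EReal)
    (hgE : ∀ x, gE x = if x ∈ domg then ((g x : EReal)) else (⊤ : EReal))
    -- the positive definite operator S, its inverse, and the norm ‖M‖_{S⁻¹}
    (S Sinv : G →L[ℝ] G)
    (hS_sym : ∀ x y : G, ⟪S x, y⟫ = ⟪x, S y⟫)
    (σ : ℝ) (hσ : 0 < σ) (hSpos : ∀ y : G, σ * ‖y‖ ^ 2 ≤ ⟪y, S y⟫)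
    (hSinv₁ : ∀ y, S (Sinv y) = y) (hSinv₂ : ∀ y, Sinv (S y) = y)
    (nM : ℝ) (hnM : 0 ≤ nM)
    (hM : ∀ x : H, Real.sqrt ⟪M x, Sinv (M x)⟫ ≤ nM * ‖x‖)
    (ydot : G)
    -- (x*, y*) is a saddle point of the Lagrangian L(x,y) = f(x) + g(x) + ⟨Mx − c, y⟩
    (xopt : H) (yopt : G) (hxopt_mem : xopt ∈ domg)
    (hsaddle₁ : ∀ y : G, f xopt + g xopt + ⟪M xopt - c, y⟫ ≤
        f xopt + g xopt + ⟪M xopt - c, yopt⟫)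
    (hsaddle₂ : ∀ x : H,
      ((f xopt + g xopt + ⟪M xopt - c, yopt⟫ : ℝ) : EReal) ≤
        ((f x + ⟪M x - c, yopt⟫ : ℝ) : EReal) + gE x)
    (Fstar : ℝ) (hFstar : Fstar = f xopt + g xopt)
    -- the iterates of Algorithm 1 with h = ι_{{c}}, for which
    -- y*_β(y; ẏ) = ẏ + β⁻¹ S⁻¹(y − c)
    (τk βk Bk : ℕ → ℝ) (xb xt xh v : ℕ → H)
    (hβ0 : 0 < βk 0) (hτ0 : τk 0 = 1) (hτpos : ∀ k, 0 < τk k)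
    (hxh : ∀ k, xh k = (1 - τk k) • xb k + τk k • xt k)
    (hβrec : ∀ k, βk (k + 1) = βk k / (1 + τk k))
    (hBrec : ∀ k, Bk (k + 1) = Lf + nM ^ 2 / βk (k + 1))
    (hv : ∀ k, v k = (ContinuousLinearMap.adjoint M)
        (ydot + (βk (k + 1))⁻¹ • Sinv (M (xh k) - c)))
    (hxt_mem : ∀ k, xt (k + 1) ∈ domg)
    (hxt : ∀ k, ∀ z ∈ domg,
      g (xt (k + 1)) + τk k * Bk (k + 1) / 2 *
          ‖xt (k + 1) - xt k + (τk k * Bk (k + 1))⁻¹ • (f' (xh k) + v k)‖ ^ 2 ≤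
        g z + τk k * Bk (k + 1) / 2 *
          ‖z - xt k + (τk k * Bk (k + 1))⁻¹ • (f' (xh k) + v k)‖ ^ 2)
    (hxb : ∀ k, xb (k + 1) = (1 - τk k) • xb k + τk k • xt (k + 1))
    (hcubic : ∀ k, (Bk (k + 1) - Lf) / Bk (k + 1) * τk (k + 1) ^ 3 + τk (k + 1) ^ 2
        + τk k ^ 2 * τk (k + 1) - τk k ^ 2 = 0)
    :
    ∀ k : ℕ,
      Real.sqrt ⟪M (xb (k + 1)) - c, Sinv (M (xb (k + 1)) - c)⟫ ≤
        βk 0 / ((k : ℝ) + 1) * (Real.sqrt ⟪yopt - ydot, S (yopt - ydot)⟫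
          + Real.sqrt (⟪yopt - ydot, S (yopt - ydot)⟫
              + Bk 1 / βk 0 * ‖xt 0 - xopt‖ ^ 2)) := by
  -- basic facts about the bilinear form ⟪·, Sinv ·⟫
  have hbsymm : ∀ u w : G, ⟪u, Sinv w⟫ = ⟪w, Sinv u⟫ := by
    intro u w
    calc ⟪u, Sinv w⟫ = ⟪S (Sinv u), Sinv w⟫ := by rw [hSinv₁]
      _ = ⟪Sinv u, S (Sinv w)⟫ := hS_sym _ _
      _ = ⟪Sinv u, w⟫ := by rw [hSinv₁]
      _ = ⟪w, Sinv u⟫ := real_inner_comm _ _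
  have hqnn : ∀ u : G, 0 ≤ ⟪u, Sinv u⟫ := by
    intro u
    have h1 := hSpos (Sinv u)
    have h2 : ⟪Sinv u, S (Sinv u)⟫ = ⟪u, Sinv u⟫ := by
      rw [hSinv₁]
      exact real_inner_comm _ _
    nlinarith [sq_nonneg ‖Sinv u‖]
  have hqzero : ∀ u : G, ⟪u, Sinv u⟫ = 0 → u = 0 := by
    intro u hu
    have h1 := hSpos (Sinv u)
    have h2 : ⟪Sinv u, S (Sinv u)⟫ = ⟪u, Sinv u⟫ := by
      rw [hSinv₁]
      exact real_inner_comm _ _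
    have h3 : σ * ‖Sinv u‖ ^ 2 ≤ 0 := by rw [h2, hu] at h1; exact h1
    have h4 : ‖Sinv u‖ ^ 2 ≤ 0 := by nlinarith
    have h5 : Sinv u = 0 := by
      have := sq_nonneg ‖Sinv u‖
      have h6 : ‖Sinv u‖ ^ 2 = 0 := le_antisymm h4 this
      have h7 : ‖Sinv u‖ = 0 := by nlinarith [norm_nonneg (Sinv u)]
      exact norm_eq_zero.mp h7
    calc u = S (Sinv u) := (hSinv₁ u).symm
      _ = S 0 := by rw [h5]
      _ = 0 := map_zero S
  have hSnn : ∀ y : G, 0 ≤ ⟪y, S y⟫ := by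
    intro y
    have := hSpos y
    nlinarith [sq_nonneg ‖y‖]
  -- feasibility of the saddle point
  have hfeas : M xopt = c := by
    have h := hsaddle₁ (yopt + (M xopt - c))
    rw [inner_add_right] at h
    have h2 : ⟪M xopt - c, M xopt - c⟫ ≤ 0 := by linarith
    have h3 : M xopt - c = 0 := real_inner_self_nonpos.mp h2
    rwa [sub_eq_zero] at h3
  -- trivial case nM = 0
  rcases eq_or_lt_of_le hnM with hnM0 | hnMpos
  · intro k
    have hq0 : ∀ x : H, M x = 0 := by
      intro x
      have h := hM x
      rw [← hnM0, zero_mul] at h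
      have hs : Real.sqrt ⟪M x, Sinv (M x)⟫ = 0 := le_antisymm h (Real.sqrt_nonneg _)
      have h2 : ⟪M x, Sinv (M x)⟫ ≤ 0 := Real.sqrt_eq_zero'.mp hs
      exact hqzero _ (le_antisymm h2 (hqnn _))
    have hc0 : c = 0 := by rw [← hfeas, hq0]
    have he : M (xb (k + 1)) - c = 0 := by rw [hq0, hc0, sub_zero]
    rw [he]
    have hL : Real.sqrt ⟪(0:G), Sinv 0⟫ = 0 := by
      rw [inner_zero_left, Real.sqrt_zero]
    rw [hL]
    apply mul_nonneg
    · apply div_nonneg hβ0.le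
      positivity
    · exact add_nonneg (Real.sqrt_nonneg _) (Real.sqrt_nonneg _)
  -- main case nM > 0
  have βpos : ∀ j, 0 < βk j := by
    intro j
    induction j with
    | zero => exact hβ0
    | succ n ih =>
      rw [hβrec]
      exact div_pos ih (by linarith [hτpos n])
  have Bpos : ∀ j, 0 < Bk (j + 1) := by
    intro j
    rw [hBrec]
    have h1 : 0 < nM ^ 2 / βk (j + 1) := div_pos (by positivity) (βpos (j + 1))
    linarith
  have BgeLf : ∀ j, Lf ≤ Bk (j + 1) := by
    intro j
    rw [hBrec]
    have h1 : 0 < nM ^ 2 / βk (j + 1) := div_pos (by positivity) (βpos (j + 1))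
    linarith
  have τbnd : ∀ j, τk j ≤ 1 ∧ 1 / ((j:ℝ) + 1) ≤ τk j := by
    intro j
    induction j with
    | zero => rw [hτ0]; norm_num
    | succ n ih =>
      obtain ⟨ih1, ih2⟩ := ih
      have hT := hτpos (n + 1)
      have hcn := hcubic n
      have hBn := Bpos n
      have ha0 : 0 ≤ (Bk (n + 1) - Lf) / Bk (n + 1) :=
        div_nonneg (by linarith [BgeLf n]) hBn.le
      have ha1 : (Bk (n + 1) - Lf) / Bk (n + 1) ≤ 1 := by
        rw [div_le_one hBn]; linarith [BgeLf n]
      have hτn := hτpos n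
      constructor
      · by_contra h
        push_neg at h
        have h1 : 0 ≤ (Bk (n + 1) - Lf) / Bk (n + 1) * τk (n + 1) ^ 3 :=
          mul_nonneg ha0 (by positivity)
        have h2 : 0 < τk n ^ 2 * (τk (n + 1) - 1) :=
          mul_pos (pow_pos hτn 2) (by linarith)
        have h3 : 1 < τk (n + 1) ^ 2 := by nlinarith
        nlinarith [hcn]
      · by_contra h
        push_neg at h
        push_cast at h
        have hn1 : (0:ℝ) < (n:ℝ) + 1 := by positivity
        have hn2 : (0:ℝ) < (n:ℝ) + 2 := by positivity
        rw [show (n:ℝ) + 1 + 1 = (n:ℝ) + 2 from by ring] at h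
        have h1 : (Bk (n + 1) - Lf) / Bk (n + 1) * τk (n + 1) ^ 3 ≤ τk (n + 1) ^ 3 := by
          nlinarith [pow_pos hT 3]
        have h2 : τk n ^ 2 * (1 - τk (n + 1)) ≤ τk (n + 1) ^ 3 + τk (n + 1) ^ 2 := by
          nlinarith [hcn, h1]
        have h3 : (1 / ((n:ℝ) + 1)) ^ 2 ≤ τk n ^ 2 := by
          have hp : 0 ≤ τk n - 1 / ((n:ℝ) + 1) := by linarith
          have hq : 0 ≤ τk n + 1 / ((n:ℝ) + 1) := by positivity
          nlinarith [mul_nonneg hp hq]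
        have hTn2 : τk (n + 1) * ((n:ℝ) + 2) < 1 := by
          rw [← lt_div_iff₀ hn2]
          exact h
        have h4 : ((n:ℝ) + 1) / ((n:ℝ) + 2) < 1 - τk (n + 1) := by
          rw [div_lt_iff₀ hn2]
          nlinarith
        have h5 : 1 / (((n:ℝ) + 1) * ((n:ℝ) + 2)) ≤ τk n ^ 2 * (1 - τk (n + 1)) := by
          have e : 1 / (((n:ℝ) + 1) * ((n:ℝ) + 2)) =
              (1 / ((n:ℝ) + 1)) ^ 2 * (((n:ℝ) + 1) / ((n:ℝ) + 2)) := by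
            field_simp
          rw [e]
          exact mul_le_mul h3 (le_of_lt h4) (by positivity) (sq_nonneg _)
        have h6 : τk (n + 1) ^ 3 + τk (n + 1) ^ 2 < ((n:ℝ) + 3) / ((n:ℝ) + 2) ^ 3 := by
          have hs3 : τk (n + 1) ^ 3 < (1 / ((n:ℝ) + 2)) ^ 3 :=
            pow_lt_pow_left₀ h hT.le (by norm_num)
          have hs2 : τk (n + 1) ^ 2 < (1 / ((n:ℝ) + 2)) ^ 2 :=
            pow_lt_pow_left₀ h hT.le (by norm_num)
          have e : (1 / ((n:ℝ) + 2)) ^ 3 + (1 / ((n:ℝ) + 2)) ^ 2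
              = ((n:ℝ) + 3) / ((n:ℝ) + 2) ^ 3 := by
            field_simp
            ring
          linarith
        have h7 : ((n:ℝ) + 3) / ((n:ℝ) + 2) ^ 3 ≤ 1 / (((n:ℝ) + 1) * ((n:ℝ) + 2)) := by
          rw [div_le_div_iff₀ (by positivity) (by positivity)]
          nlinarith [Nat.cast_nonneg (α := ℝ) n]
        linarith
  have keyrec : ∀ j, τk (j + 1) ^ 2 * Bk (j + 2)
      = (1 - τk (j + 1)) * (τk j ^ 2 * Bk (j + 1)) := by
    intro j
    have hBne : Bk (j + 1) ≠ 0 := ne_of_gt (Bpos j)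
    have hβne : βk (j + 1) ≠ 0 := ne_of_gt (βpos (j + 1))
    have h1τ : (1:ℝ) + τk (j + 1) ≠ 0 := by have := hτpos (j + 1); linarith
    have e1 : Bk (j + 2) = Bk (j + 1) + τk (j + 1) * (Bk (j + 1) - Lf) := by
      rw [show j + 2 = (j + 1) + 1 from rfl, hBrec (j + 1), hβrec (j + 1), hBrec j]
      field_simp
      ring
    have hc := hcubic j
    have hc2 : (Bk (j + 1) - Lf) * τk (j + 1) ^ 3 + Bk (j + 1) * τk (j + 1) ^ 2
        + Bk (j + 1) * (τk j ^ 2 * τk (j + 1)) - Bk (j + 1) * τk j ^ 2 = 0 := by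
      field_simp at hc
      linarith
    rw [e1]
    linear_combination hc2
  have Cbound : ∀ j, τk j ^ 2 * Bk (j + 1) ≤ Bk 1 / ((j:ℝ) + 1) := by
    intro j
    induction j with
    | zero => rw [hτ0]; norm_num
    | succ n ih =>
      have hkr := keyrec n
      have hT := hτpos (n + 1)
      have hT1 := (τbnd (n + 1)).1
      have hT2 := (τbnd (n + 1)).2
      push_cast at hT2
      rw [show (n:ℝ) + 1 + 1 = (n:ℝ) + 2 from by ring] at hT2
      have hB1 : 0 < Bk 1 := Bpos 0
      have hnn : 0 ≤ τk n ^ 2 * Bk (n + 1) := mul_nonneg (sq_nonneg _) (Bpos n).le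
      have hn1 : (0:ℝ) < (n:ℝ) + 1 := by positivity
      have hn2 : (0:ℝ) < (n:ℝ) + 2 := by positivity
      have step1 : (1 - τk (n + 1)) * (τk n ^ 2 * Bk (n + 1)) ≤
          (1 - τk (n + 1)) * (Bk 1 / ((n:ℝ) + 1)) :=
        mul_le_mul_of_nonneg_left ih (by linarith)
      have hTmul : 1 ≤ τk (n + 1) * ((n:ℝ) + 2) := by
        rw [← div_le_iff₀ hn2]
        exact hT2
      have step2 : (1 - τk (n + 1)) * (Bk 1 / ((n:ℝ) + 1)) ≤ Bk 1 / ((n:ℝ) + 2) := by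
        have key : (1 - τk (n + 1)) ≤ ((n:ℝ) + 1) / ((n:ℝ) + 2) := by
          rw [le_div_iff₀ hn2]
          nlinarith
        calc (1 - τk (n + 1)) * (Bk 1 / ((n:ℝ) + 1))
            ≤ (((n:ℝ) + 1) / ((n:ℝ) + 2)) * (Bk 1 / ((n:ℝ) + 1)) :=
              mul_le_mul_of_nonneg_right key (div_nonneg hB1.le hn1.le)
          _ = Bk 1 / ((n:ℝ) + 2) := by field_simp
      push_cast
      rw [show (n:ℝ) + 1 + 1 = (n:ℝ) + 2 from by ring]
      calc τk (n + 1) ^ 2 * Bk (n + 1 + 1)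
          = (1 - τk (n + 1)) * (τk n ^ 2 * Bk (n + 1)) := hkr
        _ ≤ (1 - τk (n + 1)) * (Bk 1 / ((n:ℝ) + 1)) := step1
        _ ≤ Bk 1 / ((n:ℝ) + 2) := step2
  have βbound : ∀ j, βk (j + 1) ≤ βk 0 / ((j:ℝ) + 2) := by
    intro j
    induction j with
    | zero => rw [hβrec 0, hτ0]; norm_num
    | succ n ih =>
      have hT := hτpos (n + 1)
      have hn2 : (0:ℝ) < (n:ℝ) + 2 := by positivity
      have hn3 : (0:ℝ) < (n:ℝ) + 3 := by positivity
      have hT2 := (τbnd (n + 1)).2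
      push_cast at hT2
      rw [show (n:ℝ) + 1 + 1 = (n:ℝ) + 2 from by ring] at hT2
      have hTmul : 1 ≤ τk (n + 1) * ((n:ℝ) + 2) := by
        rw [← div_le_iff₀ hn2]
        exact hT2
      have ih' : βk (n + 1) * ((n:ℝ) + 2) ≤ βk 0 := by
        rw [← le_div_iff₀ hn2]
        exact ih
      have hβn := βpos (n + 1)
      push_cast
      rw [show (n:ℝ) + 1 + 2 = (n:ℝ) + 3 from by ring]
      rw [hβrec (n + 1), div_le_div_iff₀ (by linarith) hn3]
      nlinarith [mul_le_mul_of_nonneg_right ih' (by linarith : (0:ℝ) ≤ 1 + τk (n + 1)),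
        mul_le_mul_of_nonneg_left hTmul hβn.le]
  -- membership of the averaged iterates
  have xbmem : ∀ j, xb (j + 1) ∈ domg := by
    intro j
    induction j with
    | zero =>
      have he : xb 1 = xt 1 := by
        rw [hxb 0, hτ0]
        simp
      rw [he]
      exact hxt_mem 0
    | succ n ih =>
      rw [hxb (n + 1)]
      exact hdomg_cvx ih (hxt_mem (n + 1)) (by linarith [(τbnd (n + 1)).1])
        (le_of_lt (hτpos (n + 1))) (by ring)
  -- the operator norm bound squared
  have hqM' : ∀ x : H, ⟪M x, Sinv (M x)⟫ ≤ nM ^ 2 * ‖x‖ ^ 2 := by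
    intro x
    have h := hM x
    have h2 := Real.sq_sqrt (hqnn (M x))
    nlinarith [Real.sqrt_nonneg ⟪M x, Sinv (M x)⟫, mul_nonneg hnM (norm_nonneg x)]
  -- instantiate the per-iteration inequality
  have per : ∀ j, (xb j ∈ domg ∨ τk j = 1) →
      f (xb (j + 1)) + g (xb (j + 1)) + (⟪M (xb (j + 1)) - c, ydot⟫
        + 1 / (2 * βk (j + 1)) * ⟪M (xb (j + 1)) - c, Sinv (M (xb (j + 1)) - c)⟫) ≤
      (1 - τk j) * (f (xb j) + g (xb j) + (⟪M (xb j) - c, ydot⟫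
        + 1 / (2 * βk j) * ⟪M (xb j) - c, Sinv (M (xb j) - c)⟫))
      + τk j * (f xopt + g xopt)
      + τk j ^ 2 * Bk (j + 1) / 2 * (‖xt j - xopt‖ ^ 2 - ‖xt (j + 1) - xopt‖ ^ 2) := by
    intro j hc
    have hββ' : βk j = (1 + τk j) * βk (j + 1) := by
      have h1τ : (1:ℝ) + τk j ≠ 0 := by have := hτpos j; linarith
      rw [hβrec j]
      field_simp
    exact stmt17_periter M c f f' Lf hLf hf_cvx hf_grad hf_lip domg g hdomg_cvx hg_cvx
      Sinv hbsymm hqnn nM hqM' ydot xopt hxopt_mem hfeas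
      (τk j) (βk j) (βk (j + 1)) (Bk (j + 1)) (hτpos j) (τbnd j).1 (βpos (j + 1)) hββ'
      (hBrec j) (Bpos j) (xb j) (xt j) (xt (j + 1)) (xh j) (hxh j) (v j) (hv j)
      (hxt_mem j) (hxt j) hc (xb (j + 1)) (hxb j)
  -- telescoping
  have tele : ∀ j, f (xb (j + 1)) + g (xb (j + 1)) + (⟪M (xb (j + 1)) - c, ydot⟫
        + 1 / (2 * βk (j + 1)) * ⟪M (xb (j + 1)) - c, Sinv (M (xb (j + 1)) - c)⟫) - Fstar
      + τk j ^ 2 * Bk (j + 1) / 2 * ‖xt (j + 1) - xopt‖ ^ 2 ≤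
      τk j ^ 2 * Bk (j + 1) / 2 * ‖xt 0 - xopt‖ ^ 2 := by
    intro j
    induction j with
    | zero =>
      have h := per 0 (Or.inr hτ0)
      rw [hτ0] at h
      norm_num at h
      rw [hτ0]
      norm_num
      linarith [h, hFstar.le, hFstar.ge]
    | succ n ih =>
      have h := per (n + 1) (Or.inl (xbmem n))
      have hkr := keyrec n
      have hT1 := (τbnd (n + 1)).1
      have hkr2 : τk (n + 1) ^ 2 * Bk (n + 2) / 2
          = (1 - τk (n + 1)) * (τk n ^ 2 * Bk (n + 1) / 2) := by linarith [hkr]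
      have ihm := mul_le_mul_of_nonneg_left ih (by linarith : (0:ℝ) ≤ 1 - τk (n + 1))
      simp only [show n + 1 + 1 = n + 2 from rfl] at h ⊢
      have e1 : τk (n + 1) ^ 2 * Bk (n + 2) / 2 * ‖xt 0 - xopt‖ ^ 2
          = (1 - τk (n + 1)) * (τk n ^ 2 * Bk (n + 1) / 2 * ‖xt 0 - xopt‖ ^ 2) := by
        rw [hkr2]; ring
      have e2 : τk (n + 1) ^ 2 * Bk (n + 2) / 2 * ‖xt (n + 2) - xopt‖ ^ 2
          = (1 - τk (n + 1)) * (τk n ^ 2 * Bk (n + 1) / 2 * ‖xt (n + 2) - xopt‖ ^ 2) := by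
        rw [hkr2]; ring
      have e3 : τk (n + 1) ^ 2 * Bk (n + 2) / 2 * ‖xt (n + 1) - xopt‖ ^ 2
          = (1 - τk (n + 1)) * (τk n ^ 2 * Bk (n + 1) / 2 * ‖xt (n + 1) - xopt‖ ^ 2) := by
        rw [hkr2]; ring
      have hFs : τk (n + 1) * (f xopt + g xopt) = τk (n + 1) * Fstar := by rw [hFstar]
      linarith [h, ihm, e1, e2, e3, hFs]
  have gap : ∀ j, f (xb (j + 1)) + g (xb (j + 1)) + (⟪M (xb (j + 1)) - c, ydot⟫
        + 1 / (2 * βk (j + 1)) * ⟪M (xb (j + 1)) - c, Sinv (M (xb (j + 1)) - c)⟫) - Fstar ≤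
      τk j ^ 2 * Bk (j + 1) / 2 * ‖xt 0 - xopt‖ ^ 2 := by
    intro j
    have h := tele j
    have hnn : 0 ≤ τk j ^ 2 * Bk (j + 1) / 2 * ‖xt (j + 1) - xopt‖ ^ 2 :=
      mul_nonneg (div_nonneg (mul_nonneg (sq_nonneg _) (Bpos j).le) (by norm_num))
        (sq_nonneg _)
    linarith
  -- Cauchy–Schwarz for the S-metric pairing
  have hCS : ∀ u : G, ⟪u, yopt - ydot⟫ ≤
      Real.sqrt ⟪u, Sinv u⟫ * Real.sqrt ⟪yopt - ydot, S (yopt - ydot)⟫ := by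
    intro u
    have hy : Sinv (S (yopt - ydot)) = yopt - ydot := hSinv₂ _
    have hqz : ⟪S (yopt - ydot), Sinv (S (yopt - ydot))⟫ = ⟪yopt - ydot, S (yopt - ydot)⟫ := by
      rw [hy]
      exact hS_sym _ _
    have hkey : ⟪u, Sinv (S (yopt - ydot))⟫ ^ 2 ≤
        ⟪u, Sinv u⟫ * ⟪S (yopt - ydot), Sinv (S (yopt - ydot))⟫ := by
      set z := S (yopt - ydot) with hzdef
      rcases eq_or_lt_of_le (hqnn z) with h0 | hpos
      · have hz0 : z = 0 := hqzero z h0.symm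
        rw [hz0]
        simp
      · have hexp : 0 ≤ ⟪⟪z, Sinv z⟫ • u - ⟪u, Sinv z⟫ • z,
            Sinv (⟪z, Sinv z⟫ • u - ⟪u, Sinv z⟫ • z)⟫ := hqnn _
        have he : ⟪⟪z, Sinv z⟫ • u - ⟪u, Sinv z⟫ • z,
            Sinv (⟪z, Sinv z⟫ • u - ⟪u, Sinv z⟫ • z)⟫
            = ⟪z, Sinv z⟫ * (⟪u, Sinv u⟫ * ⟪z, Sinv z⟫ - ⟪u, Sinv z⟫ ^ 2) := by
          simp only [map_sub, map_smul, inner_sub_left, inner_sub_right,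
            real_inner_smul_left, real_inner_smul_right]
          rw [hbsymm z u]
          ring
        rw [he] at hexp
        nlinarith [hpos]
    calc ⟪u, yopt - ydot⟫ = ⟪u, Sinv (S (yopt - ydot))⟫ := by rw [hy]
      _ ≤ |⟪u, Sinv (S (yopt - ydot))⟫| := le_abs_self _
      _ = Real.sqrt (⟪u, Sinv (S (yopt - ydot))⟫ ^ 2) := (Real.sqrt_sq_eq_abs _).symm
      _ ≤ Real.sqrt (⟪u, Sinv u⟫ * ⟪S (yopt - ydot), Sinv (S (yopt - ydot))⟫) :=
          Real.sqrt_le_sqrt hkey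
      _ = Real.sqrt ⟪u, Sinv u⟫ * Real.sqrt ⟪S (yopt - ydot), Sinv (S (yopt - ydot))⟫ :=
          Real.sqrt_mul (hqnn u) _
      _ = _ := by rw [hqz]
  -- final assembly
  intro k
  have hgap := gap k
  have hlow : Fstar ≤ f (xb (k + 1)) + g (xb (k + 1)) + ⟪M (xb (k + 1)) - c, yopt⟫ := by
    have h := hsaddle₂ (xb (k + 1))
    have hgEx : gE (xb (k + 1)) = ((g (xb (k + 1)) : ℝ) : EReal) := by
      rw [hgE]
      exact if_pos (xbmem k)
    rw [hgEx] at h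
    have hz : M xopt - c = 0 := by rw [hfeas, sub_self]
    rw [hz, inner_zero_left, add_zero] at h
    rw [← EReal.coe_add] at h
    have h2 := EReal.coe_le_coe_iff.mp h
    rw [hFstar]
    linarith
  have hβ' := βpos (k + 1)
  have hup : 1 / (2 * βk (k + 1)) * ⟪M (xb (k + 1)) - c, Sinv (M (xb (k + 1)) - c)⟫ ≤
      τk k ^ 2 * Bk (k + 1) / 2 * ‖xt 0 - xopt‖ ^ 2
      + ⟪M (xb (k + 1)) - c, yopt - ydot⟫ := by
    have hir : ⟪M (xb (k + 1)) - c, yopt - ydot⟫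
        = ⟪M (xb (k + 1)) - c, yopt⟫ - ⟪M (xb (k + 1)) - c, ydot⟫ := inner_sub_right _ _ _
    linarith [hgap, hlow, hir]
  have hCSu := hCS (M (xb (k + 1)) - c)
  have hr2 : (Real.sqrt ⟪M (xb (k + 1)) - c, Sinv (M (xb (k + 1)) - c)⟫) ^ 2
      = ⟪M (xb (k + 1)) - c, Sinv (M (xb (k + 1)) - c)⟫ := Real.sq_sqrt (hqnn _)
  set r := Real.sqrt ⟪M (xb (k + 1)) - c, Sinv (M (xb (k + 1)) - c)⟫ with hrdef
  set s := Real.sqrt ⟪yopt - ydot, S (yopt - ydot)⟫ with hsdef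
  set E := τk k ^ 2 * Bk (k + 1) / 2 * ‖xt 0 - xopt‖ ^ 2 with hEdef
  have hr0 : 0 ≤ r := Real.sqrt_nonneg _
  have hs0 : 0 ≤ s := Real.sqrt_nonneg _
  have hEnn : 0 ≤ E := by
    rw [hEdef]
    exact mul_nonneg (div_nonneg (mul_nonneg (sq_nonneg _) (Bpos k).le) (by norm_num))
      (sq_nonneg _)
  have h2β : (0:ℝ) < 2 * βk (k + 1) := by linarith
  rw [← hr2] at hup
  rw [one_div, inv_mul_eq_div] at hup
  have hup2 := (div_le_iff₀ h2β).mp hup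
  have hquad : r ^ 2 ≤ 2 * βk (k + 1) * (E + r * s) := by
    nlinarith [mul_le_mul_of_nonneg_right hCSu h2β.le, hup2]
  have hsq : (r - βk (k + 1) * s) ^ 2 ≤ (βk (k + 1)) ^ 2 * s ^ 2 + 2 * βk (k + 1) * E := by
    nlinarith [hquad]
  have hr_le : r ≤ βk (k + 1) * s
      + Real.sqrt ((βk (k + 1)) ^ 2 * s ^ 2 + 2 * βk (k + 1) * E) := by
    have h1 : r - βk (k + 1) * s ≤
        Real.sqrt ((βk (k + 1)) ^ 2 * s ^ 2 + 2 * βk (k + 1) * E) := by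
      calc r - βk (k + 1) * s ≤ |r - βk (k + 1) * s| := le_abs_self _
        _ = Real.sqrt ((r - βk (k + 1) * s) ^ 2) := (Real.sqrt_sq_eq_abs _).symm
        _ ≤ _ := Real.sqrt_le_sqrt hsq
    linarith
  have hk1 : (0:ℝ) < (k:ℝ) + 1 := by positivity
  have hk2 : (0:ℝ) < (k:ℝ) + 2 := by positivity
  have hββ : βk (k + 1) ≤ βk 0 / ((k:ℝ) + 1) := by
    refine le_trans (βbound k) ?_
    rw [div_le_div_iff₀ hk2 hk1]
    nlinarith [hβ0]
  have hterm1 : βk (k + 1) * s ≤ (βk 0 / ((k:ℝ) + 1)) * s :=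
    mul_le_mul_of_nonneg_right hββ hs0
  have hs2 : s ^ 2 = ⟪yopt - ydot, S (yopt - ydot)⟫ := Real.sq_sqrt (hSnn _)
  have h2βE : 2 * βk (k + 1) * E ≤
      (βk 0 / ((k:ℝ) + 1)) ^ 2 * (Bk 1 / βk 0 * ‖xt 0 - xopt‖ ^ 2) := by
    have hc := Cbound k
    have hb := βbound k
    have hτB0 : 0 ≤ τk k ^ 2 * Bk (k + 1) := mul_nonneg (sq_nonneg _) (Bpos k).le
    have hprod : βk (k + 1) * (τk k ^ 2 * Bk (k + 1)) ≤
        (βk 0 / ((k:ℝ) + 2)) * (Bk 1 / ((k:ℝ) + 1)) :=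
      mul_le_mul hb hc hτB0 (div_nonneg hβ0.le hk2.le)
    have hstep : (βk 0 / ((k:ℝ) + 2)) * (Bk 1 / ((k:ℝ) + 1)) ≤
        (βk 0 / ((k:ℝ) + 1)) ^ 2 * (Bk 1 / βk 0) := by
      have hB1 := Bpos 0
      have e : (βk 0 / ((k:ℝ) + 1)) ^ 2 * (Bk 1 / βk 0)
          = (βk 0 * Bk 1) / (((k:ℝ) + 1) ^ 2) := by
        field_simp
      have e2 : (βk 0 / ((k:ℝ) + 2)) * (Bk 1 / ((k:ℝ) + 1))
          = (βk 0 * Bk 1) / (((k:ℝ) + 2) * ((k:ℝ) + 1)) := by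
        field_simp
      rw [e, e2, div_le_div_iff₀ (by positivity) (by positivity)]
      nlinarith [mul_nonneg hβ0.le hB1.le, Nat.cast_nonneg (α := ℝ) k]
    have e3 : 2 * βk (k + 1) * E = βk (k + 1) * (τk k ^ 2 * Bk (k + 1))
        * ‖xt 0 - xopt‖ ^ 2 := by
      rw [hEdef]; ring
    have e4 : (βk 0 / ((k:ℝ) + 1)) ^ 2 * (Bk 1 / βk 0 * ‖xt 0 - xopt‖ ^ 2)
        = ((βk 0 / ((k:ℝ) + 1)) ^ 2 * (Bk 1 / βk 0)) * ‖xt 0 - xopt‖ ^ 2 := by ring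
    rw [e3, e4]
    exact mul_le_mul_of_nonneg_right (le_trans hprod hstep) (sq_nonneg _)
  have hterm2 : Real.sqrt ((βk (k + 1)) ^ 2 * s ^ 2 + 2 * βk (k + 1) * E) ≤
      (βk 0 / ((k:ℝ) + 1)) * Real.sqrt (⟪yopt - ydot, S (yopt - ydot)⟫
        + Bk 1 / βk 0 * ‖xt 0 - xopt‖ ^ 2) := by
    have h1 : (βk (k + 1)) ^ 2 * s ^ 2 ≤ (βk 0 / ((k:ℝ) + 1)) ^ 2 * s ^ 2 := by
      have hsum : (0:ℝ) ≤ βk 0 / ((k:ℝ) + 1) + βk (k + 1) := by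
        have := div_nonneg hβ0.le hk1.le
        linarith
      nlinarith [mul_nonneg (mul_nonneg (sub_nonneg.mpr hββ) hsum) (sq_nonneg s)]
    have e2 : (βk 0 / ((k:ℝ) + 1)) ^ 2 * (⟪yopt - ydot, S (yopt - ydot)⟫
        + Bk 1 / βk 0 * ‖xt 0 - xopt‖ ^ 2)
        = (βk 0 / ((k:ℝ) + 1)) ^ 2 * s ^ 2
        + (βk 0 / ((k:ℝ) + 1)) ^ 2 * (Bk 1 / βk 0 * ‖xt 0 - xopt‖ ^ 2) := by
      rw [hs2]; ring
    have hin : (βk (k + 1)) ^ 2 * s ^ 2 + 2 * βk (k + 1) * E ≤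
        (βk 0 / ((k:ℝ) + 1)) ^ 2 * (⟪yopt - ydot, S (yopt - ydot)⟫
        + Bk 1 / βk 0 * ‖xt 0 - xopt‖ ^ 2) := by
      linarith [h1, h2βE, e2]
    calc Real.sqrt ((βk (k + 1)) ^ 2 * s ^ 2 + 2 * βk (k + 1) * E)
        ≤ Real.sqrt ((βk 0 / ((k:ℝ) + 1)) ^ 2 * (⟪yopt - ydot, S (yopt - ydot)⟫
            + Bk 1 / βk 0 * ‖xt 0 - xopt‖ ^ 2)) := Real.sqrt_le_sqrt hin
      _ = (βk 0 / ((k:ℝ) + 1)) * Real.sqrt (⟪yopt - ydot, S (yopt - ydot)⟫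
            + Bk 1 / βk 0 * ‖xt 0 - xopt‖ ^ 2) := by
          rw [Real.sqrt_mul (sq_nonneg _), Real.sqrt_sq (div_nonneg hβ0.le hk1.le)]
  calc r ≤ βk (k + 1) * s
        + Real.sqrt ((βk (k + 1)) ^ 2 * s ^ 2 + 2 * βk (k + 1) * E) := hr_le
    _ ≤ (βk 0 / ((k:ℝ) + 1)) * s + (βk 0 / ((k:ℝ) + 1)) * Real.sqrt
          (⟪yopt - ydot, S (yopt - ydot)⟫ + Bk 1 / βk 0 * ‖xt 0 - xopt‖ ^ 2) :=
        add_le_add hterm1 hterm2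
    _ = βk 0 / ((k:ℝ) + 1) * (s + Real.sqrt (⟪yopt - ydot, S (yopt - ydot)⟫
          + Bk 1 / βk 0 * ‖xt 0 - xopt‖ ^ 2)) := by ring
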